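/- For every prime power q, every finite set A ⊆ F_q(t) with |A| ≥ 2, and every A-chain C ⊆ A, there exists a separable set S ⊆ C with |S| ≥ |C| / q. -/

import Mathlib

open scoped Classical in
/-- The non-archimedean norm on `F_q(t)`: `|x| = q ^ deg x` for `x ≠ 0`, and `|0| = 0`. -/
noncomputable def ffNorm {F : Type*} [Field F] [Fintype F] (x : RatFunc F) : ℝ :=
  if x = 0 then 0 else (Fintype.card F : ℝ) ^ x.intDegree

/-- A ball in `F_q(t)` with centre `x` and radius `r`. -/
def ffBall {F : Type*} [Field F] [Fintype F] (x : RatFunc F) (r : ℝ) : Set (RatFunc F) :=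
  {y | ffNorm (x - y) ≤ r}

/-- `r_A(a)`: the minimal distance from `a` to another element of `A`. -/
noncomputable def rA {F : Type*} [Field F] [Fintype F] (A : Set (RatFunc F))
    (a : RatFunc F) : ℝ :=
  sInf {r : ℝ | ∃ a' ∈ A, a' ≠ a ∧ r = ffNorm (a - a')}

/-- `B_A(a)`: the ball of radius `r_A(a)` centred at `a`. -/
noncomputable def BA {F : Type*} [Field F] [Fintype F] (A : Set (RatFunc F))
    (a : RatFunc F) : Set (RatFunc F) :=
  ffBall a (rA A a)

/-- `C` is an `A`-chain: a subset of `A` whose elements can be enumerated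
`c₁, …, c_n` with `B_A(c₁) ⊆ ⋯ ⊆ B_A(c_n)`. -/
def IsAChain {F : Type*} [Field F] [Fintype F] (A C : Set (RatFunc F)) : Prop :=
  C ⊆ A ∧ ∃ (n : ℕ) (c : Fin n → RatFunc F), Function.Injective c ∧ C = Set.range c ∧
    ∀ i j : Fin n, i ≤ j → BA A (c i) ⊆ BA A (c j)

/-- A finite set `S ⊆ F_q(t)` is separable if its elements can be enumerated
`a₁, …, a_n` so that for each `j` there is a ball whose intersection with `S`
is exactly `{a₁, …, a_j}`. -/
def SeparableSet {F : Type*} [Field F] [Fintype F] (S : Set (RatFunc F)) : Prop :=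
  ∃ (n : ℕ) (a : Fin n → RatFunc F), Function.Injective a ∧ S = Set.range a ∧
    ∀ j : Fin n, ∃ (x : RatFunc F) (r : ℝ), S ∩ ffBall x r = a '' {i | i ≤ j}

open scoped Classical

namespace FFProof

open Polynomial

/-- coefficient of a product at the sum of degree bounds -/
lemma coeff_mul_of_natDegree_le {R : Type*} [CommSemiring R] (p q : R[X]) (a b : ℕ)
    (hp : p.natDegree ≤ a) (hq : q.natDegree ≤ b) :
    (p * q).coeff (a + b) = p.coeff a * q.coeff b := by
  rw [Polynomial.coeff_mul]
  apply Finset.sum_eq_single (a, b)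
  · rintro ⟨i, j⟩ hij hne
    rw [Finset.HasAntidiagonal.mem_antidiagonal] at hij
    rcases lt_or_ge a i with h | h
    · rw [Polynomial.coeff_eq_zero_of_natDegree_lt (lt_of_le_of_lt hp h), zero_mul]
    · have hbj : b < j := by
        rcases lt_or_ge b j with h' | h'
        · exact h'
        · exfalso; apply hne
          have : i = a := by omega
          have : j = b := by omega
          simp_all
      rw [Polynomial.coeff_eq_zero_of_natDegree_lt (lt_of_le_of_lt hq hbj), mul_zero]
  · intro h
    exact absurd (Finset.HasAntidiagonal.mem_antidiagonal.mpr (rfl : a + b = a + b)) h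

variable {F : Type*} [Field F]

/-- residue at infinity (meaningful when `intDegree x ≤ 0`) -/
noncomputable def ffRes (x : RatFunc F) : F := x.num.coeff x.denom.natDegree

lemma intDegree_def (x : RatFunc F) :
    x.intDegree = (x.num.natDegree : ℤ) - x.denom.natDegree := rfl

lemma num_natDegree_le {x : RatFunc F} (h : x.intDegree ≤ 0) :
    x.num.natDegree ≤ x.denom.natDegree := by
  rw [intDegree_def] at h; omega

lemma ffRes_zero : ffRes (0 : RatFunc F) = 0 := by
  simp [ffRes]

lemma ffRes_ne_zero {x : RatFunc F} (hx : x ≠ 0) (h : x.intDegree = 0) : ffRes x ≠ 0 := by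
  have hnum := RatFunc.num_ne_zero hx
  have hdeg : x.num.natDegree = x.denom.natDegree := by
    rw [intDegree_def] at h; omega
  rw [ffRes, ← hdeg, Polynomial.coeff_natDegree]
  exact Polynomial.leadingCoeff_ne_zero.mpr hnum

lemma ffRes_add {x y : RatFunc F}
    (dx : x.intDegree ≤ 0) (dy : y.intDegree ≤ 0) (dxy : (x + y).intDegree ≤ 0) :
    ffRes (x + y) = ffRes x + ffRes y := by
  have h := RatFunc.num_denom_add x y
  set D1 := x.denom.natDegree
  set D2 := y.denom.natDegree
  set D3 := (x + y).denom.natDegree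
  have m1 : x.denom.Monic := x.monic_denom
  have m2 : y.denom.Monic := y.monic_denom
  have m3 : (x + y).denom.Monic := (x + y).monic_denom
  have key := congrArg (fun p : F[X] => p.coeff (D3 + (D1 + D2))) h
  -- LHS
  have hd12 : (x.denom * y.denom).natDegree ≤ D1 + D2 :=
    Polynomial.natDegree_mul_le
  have hL : ((x + y).num * (x.denom * y.denom)).coeff (D3 + (D1 + D2)) = ffRes (x + y) := by
    rw [coeff_mul_of_natDegree_le _ _ _ _ (num_natDegree_le dxy) hd12,
      coeff_mul_of_natDegree_le _ _ _ _ le_rfl le_rfl,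
      Polynomial.coeff_natDegree, Polynomial.coeff_natDegree,
      m1.leadingCoeff, m2.leadingCoeff, ffRes]
    ring
  -- RHS
  have hsum : (x.num * y.denom + x.denom * y.num).natDegree ≤ D1 + D2 := by
    apply le_trans (Polynomial.natDegree_add_le _ _)
    apply max_le
    · exact le_trans Polynomial.natDegree_mul_le (add_le_add (num_natDegree_le dx) le_rfl)
    · exact le_trans Polynomial.natDegree_mul_le (add_le_add le_rfl (num_natDegree_le dy))
  have hR : ((x.num * y.denom + x.denom * y.num) * (x + y).denom).coeff (D3 + (D1 + D2))
      = ffRes x + ffRes y := by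
    rw [add_comm D3 (D1 + D2),
      coeff_mul_of_natDegree_le _ _ _ _ hsum le_rfl,
      Polynomial.coeff_natDegree, m3.leadingCoeff, mul_one,
      Polynomial.coeff_add,
      coeff_mul_of_natDegree_le _ _ _ _ (num_natDegree_le dx) le_rfl,
      coeff_mul_of_natDegree_le _ _ _ _ le_rfl (num_natDegree_le dy),
      Polynomial.coeff_natDegree, Polynomial.coeff_natDegree,
      m1.leadingCoeff, m2.leadingCoeff, ffRes, ffRes]
    ring
  rw [hL, hR] at key
  exact key

lemma intDegree_inv {x : RatFunc F} (hx : x ≠ 0) : x⁻¹.intDegree = -x.intDegree := by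
  have h := RatFunc.intDegree_mul hx (inv_ne_zero hx)
  rw [mul_inv_cancel₀ hx, RatFunc.intDegree_one] at h
  omega

lemma intDegree_pow {x : RatFunc F} (hx : x ≠ 0) (k : ℕ) :
    (x ^ k).intDegree = k * x.intDegree := by
  induction k with
  | zero => simp
  | succ n ih =>
      rw [pow_succ, RatFunc.intDegree_mul (pow_ne_zero _ hx) hx, ih]
      push_cast; ring

lemma intDegree_zpow {x : RatFunc F} (hx : x ≠ 0) (k : ℤ) :
    (x ^ k).intDegree = k * x.intDegree := by
  cases k with
  | ofNat n => rw [Int.ofNat_eq_coe, zpow_natCast, intDegree_pow hx]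
  | negSucc n =>
      rw [zpow_negSucc, intDegree_inv (pow_ne_zero _ hx), intDegree_pow hx, Int.negSucc_eq]
      push_cast; ring

end FFProof

namespace FFProof

variable {F : Type*} [Field F] [Fintype F]

lemma card_gt_one : (1:ℝ) < (Fintype.card F : ℝ) := by
  exact_mod_cast Fintype.one_lt_card

lemma ffNorm_zero : ffNorm (0 : RatFunc F) = 0 := by
  unfold ffNorm; simp

lemma ffNorm_eq {x : RatFunc F} (hx : x ≠ 0) :
    ffNorm x = (Fintype.card F : ℝ) ^ x.intDegree := by
  unfold ffNorm; rw [if_neg hx]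

lemma ffNorm_nonneg (x : RatFunc F) : 0 ≤ ffNorm x := by
  rcases eq_or_ne x 0 with rfl | hx
  · rw [ffNorm_zero]
  · rw [ffNorm_eq hx]
    exact le_of_lt (zpow_pos (lt_trans zero_lt_one card_gt_one) _)

lemma ffNorm_pos {x : RatFunc F} (hx : x ≠ 0) : 0 < ffNorm x := by
  rw [ffNorm_eq hx]
  exact zpow_pos (lt_trans zero_lt_one card_gt_one) _

lemma ffNorm_neg (x : RatFunc F) : ffNorm (-x) = ffNorm x := by
  rcases eq_or_ne x 0 with rfl | hx
  · rw [neg_zero]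
  · rw [ffNorm_eq hx, ffNorm_eq (neg_ne_zero.mpr hx), RatFunc.intDegree_neg]

lemma ffNorm_sub_comm (x y : RatFunc F) : ffNorm (x - y) = ffNorm (y - x) := by
  rw [← neg_sub, ffNorm_neg]

lemma ffNorm_mono {x y : RatFunc F} (hx : x ≠ 0) (hy : y ≠ 0)
    (h : x.intDegree ≤ y.intDegree) : ffNorm x ≤ ffNorm y := by
  rw [ffNorm_eq hx, ffNorm_eq hy]
  exact zpow_le_zpow_right₀ (le_of_lt card_gt_one) h

lemma ffNorm_add_le (x y : RatFunc F) :
    ffNorm (x + y) ≤ max (ffNorm x) (ffNorm y) := by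
  rcases eq_or_ne (x + y) 0 with hxy | hxy
  · rw [hxy, ffNorm_zero]
    exact le_max_of_le_left (ffNorm_nonneg x)
  rcases eq_or_ne x 0 with rfl | hx
  · rw [zero_add]; exact le_max_right _ _
  rcases eq_or_ne y 0 with rfl | hy
  · rw [add_zero]; exact le_max_left _ _
  have h := RatFunc.intDegree_add_le hy hxy
  rcases le_total x.intDegree y.intDegree with hd | hd
  · rw [max_eq_right hd] at h
    exact le_max_of_le_right (ffNorm_mono hxy hy h)
  · rw [max_eq_left hd] at h
    exact le_max_of_le_left (ffNorm_mono hxy hx h)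

lemma intDegree_of_ffNorm_eq {x : RatFunc F} (hx : x ≠ 0) {m : ℤ}
    (h : ffNorm x = (Fintype.card F : ℝ) ^ m) : x.intDegree = m := by
  rw [ffNorm_eq hx] at h
  exact zpow_right_injective₀ (lt_trans zero_lt_one card_gt_one) (ne_of_gt card_gt_one) h

section rA

variable {A : Set (RatFunc F)} (hA : A.Finite) (h2A : 2 ≤ A.ncard)
include hA h2A

lemma rA_mem (a : RatFunc F) :
    ∃ a' ∈ A, a' ≠ a ∧ rA A a = ffNorm (a - a') := by
  have hset : {r : ℝ | ∃ a' ∈ A, a' ≠ a ∧ r = ffNorm (a - a')}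
      = (fun a' => ffNorm (a - a')) '' (A \ {a}) := by
    ext r
    constructor
    · rintro ⟨a', h1, h2, rfl⟩
      exact ⟨a', ⟨h1, h2⟩, rfl⟩
    · rintro ⟨a', ⟨h1, h2⟩, rfl⟩
      exact ⟨a', h1, h2, rfl⟩
  have hne : (A \ {a}).Nonempty := by
    rw [Set.nonempty_iff_ne_empty]
    intro h
    have hsub : A ⊆ {a} := Set.diff_eq_empty.mp h
    have := Set.ncard_le_ncard hsub (Set.finite_singleton a)
    simp [Set.ncard_singleton] at this
    omega
  have hfin : ((fun a' => ffNorm (a - a')) '' (A \ {a})).Finite :=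
    hA.diff.image _
  have hmem : sInf ((fun a' => ffNorm (a - a')) '' (A \ {a}))
      ∈ (fun a' => ffNorm (a - a')) '' (A \ {a}) :=
    Set.Nonempty.csInf_mem (hne.image _) hfin
  obtain ⟨a', ⟨h1, h2⟩, h3⟩ := hmem
  refine ⟨a', h1, h2, ?_⟩
  rw [rA, hset]
  exact h3.symm

lemma rA_le {a a' : RatFunc F} (h1 : a' ∈ A) (hne : a' ≠ a) :
    rA A a ≤ ffNorm (a - a') := by
  have hset : {r : ℝ | ∃ b ∈ A, b ≠ a ∧ r = ffNorm (a - b)}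
      = (fun b => ffNorm (a - b)) '' (A \ {a}) := by
    ext r
    constructor
    · rintro ⟨b, hb1, hb2, rfl⟩
      exact ⟨b, ⟨hb1, hb2⟩, rfl⟩
    · rintro ⟨b, ⟨hb1, hb2⟩, rfl⟩
      exact ⟨b, hb1, hb2, rfl⟩
  have hfin : ((fun b => ffNorm (a - b)) '' (A \ {a})).Finite := hA.diff.image _
  have hbdd : BddBelow ((fun b => ffNorm (a - b)) '' (A \ {a})) := hfin.bddBelow
  rw [rA, hset]
  exact csInf_le hbdd ⟨a', ⟨h1, hne⟩, rfl⟩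

lemma rA_pos (a : RatFunc F) : 0 < rA A a := by
  obtain ⟨a', _, hne, hval⟩ := rA_mem hA h2A a
  rw [hval]
  exact ffNorm_pos (sub_ne_zero_of_ne (Ne.symm hne))

lemma mem_BA_self (a : RatFunc F) : a ∈ BA A a := by
  show ffNorm (a - a) ≤ rA A a
  rw [sub_self, ffNorm_zero]
  exact le_of_lt (rA_pos hA h2A a)

lemma ball_eq {a b : RatFunc F} (hbA : b ∈ A)
    (hsub : BA A b ⊆ BA A a) (hm : a ∈ BA A b) : BA A a = BA A b := by
  rcases eq_or_ne a b with rfl | hab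
  · rfl
  have h1 : rA A a ≤ ffNorm (a - b) := rA_le hA h2A hbA (Ne.symm hab)
  have h2 : ffNorm (b - a) ≤ rA A b := hm
  have h3 : ffNorm (a - b) ≤ rA A b := by rw [ffNorm_sub_comm]; exact h2
  apply Set.Subset.antisymm _ hsub
  intro y hy
  show ffNorm (b - y) ≤ rA A b
  have hdec : b - y = (b - a) + (a - y) := by ring
  rw [hdec]
  apply le_trans (ffNorm_add_le _ _)
  apply max_le h2
  exact le_trans hy (le_trans h1 h3)

lemma dist_eq_rA {a b : RatFunc F} (hbA : b ∈ A) (hne : b ≠ a)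
    (hBA : BA A a = BA A b) : ffNorm (a - b) = rA A a := by
  apply le_antisymm
  · have : b ∈ BA A a := hBA ▸ mem_BA_self hA h2A b
    exact this
  · exact rA_le hA h2A hbA hne

end rA

lemma equidistant_absurd (m : ℤ) (d : Fin (Fintype.card F + 1) → RatFunc F)
    (hd : Function.Injective d)
    (hdist : ∀ k l, k ≠ l → ffNorm (d k - d l) = (Fintype.card F : ℝ) ^ m) : False := by
  have hX : (RatFunc.X : RatFunc F) ≠ 0 := RatFunc.X_ne_zero
  set u : RatFunc F := RatFunc.X ^ (-m) with hu
  have hu0 : u ≠ 0 := zpow_ne_zero _ hX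
  have hudeg : u.intDegree = -m := by
    rw [hu, intDegree_zpow hX, RatFunc.intDegree_X]; ring
  set h : Fin (Fintype.card F + 1) → RatFunc F := fun k => (d k - d 0) * u with hh
  have h0 : h 0 = 0 := by rw [hh]; simp
  have hdeg : ∀ k l, k ≠ l → (h k - h l).intDegree = 0 ∧ h k - h l ≠ 0 := by
    intro k l hkl
    have hne : d k - d l ≠ 0 := sub_ne_zero_of_ne (fun e0 => hkl (hd e0))
    have hdm : (d k - d l).intDegree = m := intDegree_of_ffNorm_eq hne (hdist k l hkl)
    have hsub : h k - h l = (d k - d l) * u := by rw [hh]; ring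
    rw [hsub]
    refine ⟨?_, mul_ne_zero hne hu0⟩
    rw [RatFunc.intDegree_mul hne hu0, hdm, hudeg]; ring
  have hdeg0 : ∀ k, (h k).intDegree ≤ 0 := by
    intro k
    rcases eq_or_ne k 0 with rfl | hk
    · rw [h0, RatFunc.intDegree_zero]
    · have := (hdeg k 0 hk).1
      rw [h0, sub_zero] at this
      omega
  set φ : Fin (Fintype.card F + 1) → F := fun k => ffRes (h k) with hφ
  have hinj : Function.Injective φ := by
    intro k l heq
    by_contra hkl
    obtain ⟨hD, hN⟩ := hdeg k l hkl
    have hne0 : ffRes (h k - h l) ≠ 0 := ffRes_ne_zero hN hD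
    apply hne0
    have hadd : ffRes (h k) = ffRes (h k - h l) + ffRes (h l) := by
      have := ffRes_add (x := h k - h l) (y := h l) (le_of_eq hD) (hdeg0 l)
        (by rw [sub_add_cancel]; exact hdeg0 k)
      rw [sub_add_cancel] at this
      exact this
    have hthis : φ k = ffRes (h k - h l) + φ l := hadd
    rw [heq] at hthis
    exact right_eq_add.mp hthis
  have := Fintype.card_le_of_injective φ hinj
  simp at this

lemma fiber_le {A : Set (RatFunc F)} (hA : A.Finite) (h2A : 2 ≤ A.ncard)
    {n : ℕ} (c : Fin n → RatFunc F) (hcinj : Function.Injective c)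
    (hcA : ∀ i, c i ∈ A) (b : Set (RatFunc F)) :
    (Finset.univ.filter (fun i => BA A (c i) = b)).card ≤ Fintype.card F := by
  by_contra hlt
  push_neg at hlt
  obtain ⟨T, hTsub, hTcard⟩ := Finset.exists_subset_card_eq
    (show Fintype.card F + 1 ≤ (Finset.univ.filter (fun i => BA A (c i) = b)).card by omega)
  set e := T.orderIsoOfFin hTcard with he
  set d : Fin (Fintype.card F + 1) → RatFunc F := fun k => c (e k) with hd
  have hdinj : Function.Injective d := by
    intro k l hkl
    exact e.injective (Subtype.coe_injective (hcinj hkl))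
  have hball : ∀ k, BA A (d k) = b := by
    intro k
    exact (Finset.mem_filter.mp (hTsub (e k).2)).2
  have hdist : ∀ k l, k ≠ l → ffNorm (d k - d l) = rA A (d k) := by
    intro k l hkl
    exact dist_eq_rA hA h2A (hcA _)
      (fun e0 => hkl (hdinj e0).symm) ((hball k).trans (hball l).symm)
  have hrA : ∀ k, rA A (d k) = rA A (d 0) := by
    intro k
    rcases eq_or_ne k 0 with rfl | hk
    · rfl
    · rw [← hdist k 0 hk, ffNorm_sub_comm, hdist 0 k (Ne.symm hk)]
  obtain ⟨a', _, ha'ne, hval⟩ := rA_mem hA h2A (d 0)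
  have hm : rA A (d 0) = (Fintype.card F : ℝ) ^ (d 0 - a').intDegree := by
    rw [hval, ffNorm_eq (sub_ne_zero_of_ne (Ne.symm ha'ne))]
  exact equidistant_absurd ((d 0 - a').intDegree) d hdinj
    (fun k l hkl => by rw [hdist k l hkl, hrA k, hm])

end FFProof

theorem stmt19 (F : Type) [Field F] [Fintype F]
    (A : Set (RatFunc F)) (hA : A.Finite) (h2 : 2 ≤ A.ncard)
    (C : Set (RatFunc F)) (hC : IsAChain A C) :
    ∃ S ⊆ C, SeparableSet S ∧ (C.ncard : ℝ) / (Fintype.card F : ℝ) ≤ (S.ncard : ℝ) := by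
  classical
  obtain ⟨hCA, n, c, hcinj, hCr, hchain⟩ := hC
  have hq1 : (1:ℝ) < (Fintype.card F : ℝ) := FFProof.card_gt_one
  have hq0 : (0:ℝ) < (Fintype.card F : ℝ) := lt_trans zero_lt_one hq1
  have hcA : ∀ i, c i ∈ A := fun i => hCA (hCr ▸ Set.mem_range_self i)
  set f : Fin n → Set (RatFunc F) := fun i => BA A (c i) with hf
  set S' : Finset (Fin n) := Finset.univ.filter (fun i => ∀ j, f j = f i → i ≤ j) with hS'
  set k := S'.card with hk
  set e := S'.orderIsoOfFin rfl with he
  set a : Fin k → RatFunc F := fun j => c (e j) with ha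
  have heS' : ∀ j : Fin k, ∀ i : Fin n, f i = f ((e j : Fin n)) → (e j : Fin n) ≤ i := by
    intro j i hi
    exact (Finset.mem_filter.mp (e j).2).2 i hi
  have hainj : Function.Injective a := by
    intro i j hij
    exact e.injective (Subtype.coe_injective (hcinj hij))
  set S : Set (RatFunc F) := Set.range a with hSdef
  have hSsub : S ⊆ C := by
    rintro _ ⟨j, rfl⟩
    rw [hCr]
    exact Set.mem_range_self _
  have hkey : ∀ i j : Fin k, a i ∈ BA A (a j) → i ≤ j := by
    intro i j hmem
    by_contra hij
    push_neg at hij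
    have hle : (e j : Fin n) ≤ (e i : Fin n) := e.monotone (le_of_lt hij)
    have hsub : BA A (c (e j)) ⊆ BA A (c (e i)) := hchain _ _ hle
    have heq : BA A (c (e i)) = BA A (c (e j)) :=
      FFProof.ball_eq hA h2 (hcA (e j)) hsub hmem
    have h1 : (e i : Fin n) ≤ (e j : Fin n) := heS' i (e j) heq.symm
    have : (e i : Fin n) = (e j : Fin n) := le_antisymm h1 hle
    have : i = j := e.injective (Subtype.coe_injective this)
    omega
  have hsep : SeparableSet S := by
    refine ⟨k, a, hainj, rfl, ?_⟩
    intro j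
    refine ⟨a j, rA A (a j), ?_⟩
    ext y
    constructor
    · rintro ⟨⟨i, rfl⟩, hmem⟩
      exact ⟨i, hkey i j hmem, rfl⟩
    · rintro ⟨i, hij, rfl⟩
      refine ⟨Set.mem_range_self _, ?_⟩
      have hle : (e i : Fin n) ≤ (e j : Fin n) := e.monotone hij
      exact hchain _ _ hle (FFProof.mem_BA_self hA h2 (a i))
  have himg : Finset.univ.image f = S'.image f := by
    apply Finset.Subset.antisymm
    · intro b hb
      rw [Finset.mem_image] at hb
      obtain ⟨i, -, rfl⟩ := hb
      have hTne : (Finset.univ.filter (fun j => f j = f i)).Nonempty :=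
        ⟨i, by simp⟩
      set i0 := (Finset.univ.filter (fun j => f j = f i)).min' hTne with hi0
      have hi0T := (Finset.univ.filter (fun j => f j = f i)).min'_mem hTne
      rw [Finset.mem_filter] at hi0T
      refine Finset.mem_image.mpr ⟨i0, Finset.mem_filter.mpr ⟨Finset.mem_univ _, fun j hj => ?_⟩, hi0T.2⟩
      apply Finset.min'_le
      rw [Finset.mem_filter]
      exact ⟨Finset.mem_univ _, by rw [hj, hi0T.2]⟩
    · exact Finset.image_subset_image (Finset.subset_univ _)
  have hinjOn : Set.InjOn f ↑S' := by
    intro i hi j hj hij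
    have hi' := Finset.mem_filter.mp (Finset.mem_coe.mp hi)
    have hj' := Finset.mem_filter.mp (Finset.mem_coe.mp hj)
    exact le_antisymm (hi'.2 j hij.symm) (hj'.2 i hij)
  have hcard_img : (Finset.univ.image f).card = k := by
    rw [himg, Finset.card_image_of_injOn hinjOn]
  have hnk : n ≤ Fintype.card F * k := by
    have hmain := Finset.card_le_mul_card_image (f := f) Finset.univ (Fintype.card F)
      (fun b _ => FFProof.fiber_le hA h2 c hcinj hcA b)
    rw [hcard_img, Finset.card_univ, Fintype.card_fin] at hmain
    exact hmain
  have hCn : C.ncard = n := by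
    rw [hCr, ← Set.image_univ, Set.ncard_image_of_injective _ hcinj, Set.ncard_univ,
      Nat.card_eq_fintype_card, Fintype.card_fin]
  have hSn : S.ncard = k := by
    rw [hSdef, ← Set.image_univ, Set.ncard_image_of_injective _ hainj, Set.ncard_univ,
      Nat.card_eq_fintype_card, Fintype.card_fin]
  refine ⟨S, hSsub, hsep, ?_⟩
  rw [hCn, hSn, div_le_iff₀ hq0]
  calc (n : ℝ) ≤ ((Fintype.card F * k : ℕ) : ℝ) := by exact_mod_cast hnk
    _ = (k : ℝ) * (Fintype.card F : ℝ) := by push_cast; ring
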